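/- For every n > 0 and all admissible allocation functions π₁, π₂, one has R_I(π₁,π₂) ≥ R_I(π₁⁰,π₂⁰), where π₁⁰(x) ≡ σ₁/(σ₁+σ₂) and π₂⁰(x) ≡ σ₂/(σ₁+σ₂); that is, the ideal regret R_I is minimized by the constant allocation proportional to the standard deviations. -/

import Mathlib

open Matrix MeasureTheory

/-- Standard normal cumulative distribution function `Φ`. -/
noncomputable def stdNormalCDF (x : ℝ) : ℝ :=
  ∫ t in Set.Iic x, Real.exp (-t ^ 2 / 2) / Real.sqrt (2 * Real.pi)

/-- The feature vector `(1, xᵀ)ᵀ ∈ ℝ^{p+1}` of a covariate vector `x ∈ ℝ^p`. -/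
def feat {p : ℕ} (x : Fin p → ℝ) : Fin (p + 1) → ℝ := Fin.cons 1 x

/-- Moment matrix `∫_{[0,1]^p} (1,xᵀ)ᵀ(1,xᵀ) w(x) dx` of a weight function `w`. -/
noncomputable def momentMatrix (p : ℕ) (w : (Fin p → ℝ) → ℝ) :
    Matrix (Fin (p + 1)) (Fin (p + 1)) ℝ :=
  Matrix.of fun i j => ∫ x in Set.Icc (0 : Fin p → ℝ) 1, feat x i * feat x j * w x

/-- The variance function `V_π(x) = (1,xᵀ)(Σ₁+Σ₂)(1,xᵀ)ᵀ` induced by the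
allocation functions `π₁, π₂` and residual standard deviations `σ₁, σ₂`. -/
noncomputable def varFun (p : ℕ) (f : (Fin p → ℝ) → ℝ) (σ1 σ2 : ℝ)
    (π1 π2 : (Fin p → ℝ) → ℝ) (x : Fin p → ℝ) : ℝ :=
  let ν1 := ∫ y in Set.Icc (0 : Fin p → ℝ) 1, π1 y * f y
  let ν2 := ∫ y in Set.Icc (0 : Fin p → ℝ) 1, π2 y * f y
  let Q1 := (1 / ν1) • momentMatrix p fun y => π1 y * f y
  let Q2 := (1 / ν2) • momentMatrix p fun y => π2 y * f y
  feat x ⬝ᵥ (((σ1 ^ 2 / ν1) • Q1⁻¹ + (σ2 ^ 2 / ν2) • Q2⁻¹) *ᵥ feat x)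

/-- The ideal regret
`R_I(π₁,π₂) = ∫_{[0,1]^p} Φ(−√n |g₁−g₂|/√V_π) |g₂−g₁| f`. -/
noncomputable def idealRegret (p : ℕ) (f : (Fin p → ℝ) → ℝ) (σ1 σ2 α1 α2 : ℝ)
    (β1 β2 : Fin p → ℝ) (n : ℝ) (π1 π2 : (Fin p → ℝ) → ℝ) : ℝ :=
  let g1 : (Fin p → ℝ) → ℝ := fun x => α1 + ∑ i, β1 i * x i
  let g2 : (Fin p → ℝ) → ℝ := fun x => α2 + ∑ i, β2 i * x i
  ∫ x in Set.Icc (0 : Fin p → ℝ) 1,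
    stdNormalCDF (-(Real.sqrt n * |g1 x - g2 x|) /
        Real.sqrt (varFun p f σ1 σ2 π1 π2 x)) * |g2 x - g1 x| * f x

section Aux

lemma gaussDens_integrable :
    Integrable (fun t : ℝ => Real.exp (-t ^ 2 / 2) / Real.sqrt (2 * Real.pi)) := by
  have h : (fun t : ℝ => Real.exp (-t ^ 2 / 2) / Real.sqrt (2 * Real.pi))
      = fun t => Real.exp (-(1/2 : ℝ) * t ^ 2) / Real.sqrt (2 * Real.pi) := by
    funext t; congr 2; ring
  rw [h]
  exact (integrable_exp_neg_mul_sq (by norm_num)).div_const _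

lemma gaussDens_nonneg (t : ℝ) : 0 ≤ Real.exp (-t ^ 2 / 2) / Real.sqrt (2 * Real.pi) :=
  div_nonneg (Real.exp_nonneg _) (Real.sqrt_nonneg _)

lemma stdNormalCDF_nonneg (x : ℝ) : 0 ≤ stdNormalCDF x :=
  setIntegral_nonneg measurableSet_Iic fun t _ => gaussDens_nonneg t

lemma stdNormalCDF_le (x : ℝ) :
    stdNormalCDF x ≤ ∫ t, Real.exp (-t ^ 2 / 2) / Real.sqrt (2 * Real.pi) :=
  setIntegral_le_integral gaussDens_integrable (ae_of_all _ gaussDens_nonneg)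

lemma stdNormalCDF_mono : Monotone stdNormalCDF := fun a b hab =>
  setIntegral_mono_set gaussDens_integrable.integrableOn (ae_of_all _ gaussDens_nonneg)
    (HasSubset.Subset.eventuallyLE (Set.Iic_subset_Iic.2 hab))

lemma symm_dot {m : ℕ} {A : Matrix (Fin m) (Fin m) ℝ} (hA : A.IsHermitian)
    (u v : Fin m → ℝ) : u ⬝ᵥ A *ᵥ v = v ⬝ᵥ A *ᵥ u := by
  have hT : Aᵀ = A := by
    ext i j
    have := congrFun (congrFun hA.eq i) j
    simpa [conjTranspose_apply] using this
  rw [dotProduct_mulVec, ← mulVec_transpose, hT, dotProduct_comm]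

lemma dot_sq_le {m : ℕ} {A : Matrix (Fin m) (Fin m) ℝ} (hA : A.PosSemidef)
    (a b : Fin m → ℝ) : (a ⬝ᵥ A *ᵥ b) ^ 2 ≤ (a ⬝ᵥ A *ᵥ a) * (b ⬝ᵥ A *ᵥ b) := by
  have hs := symm_dot hA.1 b a
  have key : ∀ t : ℝ, 0 ≤ (b ⬝ᵥ A *ᵥ b) * (t * t) + (2 * (a ⬝ᵥ A *ᵥ b)) * t + a ⬝ᵥ A *ᵥ a := by
    intro t
    have h0 := hA.dotProduct_mulVec_nonneg (a + t • b)
    simp only [star_trivial, mulVec_add, mulVec_smul, dotProduct_add, add_dotProduct,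
      dotProduct_smul, smul_dotProduct, smul_eq_mul] at h0
    rw [hs] at h0
    ring_nf at h0 ⊢
    linarith
  have hd := discrim_le_zero key
  rw [discrim] at hd
  nlinarith [hd]

lemma scalar_key (σ1 σ2 ν1 ν2 q q1 q2 r1 r2 : ℝ) (hσ1 : 0 < σ1) (hσ2 : 0 < σ2)
    (hν1 : 0 < ν1) (hν2 : 0 < ν2) (hq : 0 < q) (hq1 : 0 < q1) (hq2 : 0 < q2)
    (hr1 : 0 ≤ r1) (hr2 : 0 ≤ r2)
    (h1 : q ^ 2 ≤ q1 * r1) (h2 : q ^ 2 ≤ q2 * r2) (h3 : ν1 * r1 + ν2 * r2 = q) :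
    (σ1 + σ2) ^ 2 * q ≤ σ1 ^ 2 / ν1 * q1 + σ2 ^ 2 / ν2 * q2 := by
  have hr1' : 0 < r1 := by nlinarith
  have hr2' : 0 < r2 := by nlinarith
  rw [← sub_nonneg]
  have key : σ1 ^ 2 / ν1 * q1 + σ2 ^ 2 / ν2 * q2 - (σ1 + σ2) ^ 2 * q
      = (σ1 ^ 2 * ν2 * q1 + σ2 ^ 2 * ν1 * q2 - (σ1 + σ2) ^ 2 * q * ν1 * ν2) / (ν1 * ν2) := by
    field_simp
  rw [key]
  apply div_nonneg _ (by positivity)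
  subst h3
  nlinarith [mul_le_mul_of_nonneg_left h1 (show (0:ℝ) ≤ σ1 ^ 2 * ν2 * r2 by positivity),
    mul_le_mul_of_nonneg_left h2 (show (0:ℝ) ≤ σ2 ^ 2 * ν1 * r1 by positivity),
    mul_nonneg (by positivity : (0:ℝ) ≤ ν1 * r1 + ν2 * r2)
      (sq_nonneg (σ1 * ν2 * r2 - σ2 * ν1 * r1)),
    mul_pos hr1' hr2']

lemma matrix_key {m : ℕ} {Q1 Q2 : Matrix (Fin m) (Fin m) ℝ} {ν1 ν2 σ1 σ2 : ℝ}
    (hσ1 : 0 < σ1) (hσ2 : 0 < σ2) (hν1 : 0 < ν1) (hν2 : 0 < ν2)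
    (hQ1 : Q1.PosDef) (hQ2 : Q2.PosDef) (v : Fin m → ℝ) (hv : v ≠ 0) :
    (σ1 + σ2) ^ 2 * (v ⬝ᵥ (ν1 • Q1 + ν2 • Q2)⁻¹ *ᵥ v) ≤
      σ1 ^ 2 / ν1 * (v ⬝ᵥ Q1⁻¹ *ᵥ v) + σ2 ^ 2 / ν2 * (v ⬝ᵥ Q2⁻¹ *ᵥ v) := by
  set Q : Matrix (Fin m) (Fin m) ℝ := ν1 • Q1 + ν2 • Q2 with hQdef
  have hQ : Q.PosDef := by
    refine PosDef.of_dotProduct_mulVec_pos ?_ (fun x hx => ?_)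
    · show Qᴴ = Q
      rw [hQdef, conjTranspose_add, conjTranspose_smul, conjTranspose_smul, hQ1.1.eq, hQ2.1.eq]
      simp
    · have h1 := hQ1.dotProduct_mulVec_pos hx
      have h2 := hQ2.dotProduct_mulVec_pos hx
      simp only [hQdef, add_mulVec, smul_mulVec, dotProduct_add, dotProduct_smul,
        smul_eq_mul] at *
      nlinarith
  set w : Fin m → ℝ := Q⁻¹ *ᵥ v with hw
  set u1 : Fin m → ℝ := Q1⁻¹ *ᵥ v with hu1
  set u2 : Fin m → ℝ := Q2⁻¹ *ᵥ v with hu2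
  have hQw : Q *ᵥ w = v := by
    rw [hw, mulVec_mulVec, mul_nonsing_inv _ hQ.det_pos.ne'.isUnit, one_mulVec]
  have hQ1u : Q1 *ᵥ u1 = v := by
    rw [hu1, mulVec_mulVec, mul_nonsing_inv _ hQ1.det_pos.ne'.isUnit, one_mulVec]
  have hQ2u : Q2 *ᵥ u2 = v := by
    rw [hu2, mulVec_mulVec, mul_nonsing_inv _ hQ2.det_pos.ne'.isUnit, one_mulVec]
  have hq_pos : 0 < v ⬝ᵥ w := by simpa using hQ.inv.dotProduct_mulVec_pos hv
  have hq1_pos : 0 < v ⬝ᵥ u1 := by simpa using hQ1.inv.dotProduct_mulVec_pos hv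
  have hq2_pos : 0 < v ⬝ᵥ u2 := by simpa using hQ2.inv.dotProduct_mulVec_pos hv
  have hr1 : 0 ≤ w ⬝ᵥ Q1 *ᵥ w := by simpa using hQ1.posSemidef.dotProduct_mulVec_nonneg w
  have hr2 : 0 ≤ w ⬝ᵥ Q2 *ᵥ w := by simpa using hQ2.posSemidef.dotProduct_mulVec_nonneg w
  have e1 : v ⬝ᵥ w = u1 ⬝ᵥ Q1 *ᵥ w := by
    conv_lhs => rw [← hQ1u]
    rw [dotProduct_comm, symm_dot hQ1.1]
  have e2 : v ⬝ᵥ w = u2 ⬝ᵥ Q2 *ᵥ w := by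
    conv_lhs => rw [← hQ2u]
    rw [dotProduct_comm, symm_dot hQ2.1]
  have f1 : u1 ⬝ᵥ Q1 *ᵥ u1 = v ⬝ᵥ u1 := by rw [hQ1u, dotProduct_comm]
  have f2 : u2 ⬝ᵥ Q2 *ᵥ u2 = v ⬝ᵥ u2 := by rw [hQ2u, dotProduct_comm]
  have h1 : (v ⬝ᵥ w) ^ 2 ≤ (v ⬝ᵥ u1) * (w ⬝ᵥ Q1 *ᵥ w) := by
    rw [e1, ← f1]; exact dot_sq_le hQ1.posSemidef u1 w
  have h2 : (v ⬝ᵥ w) ^ 2 ≤ (v ⬝ᵥ u2) * (w ⬝ᵥ Q2 *ᵥ w) := by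
    rw [e2, ← f2]; exact dot_sq_le hQ2.posSemidef u2 w
  have hvw : v ⬝ᵥ w = w ⬝ᵥ Q *ᵥ w := by
    conv_lhs => rw [← hQw]
    exact dotProduct_comm _ _
  have h3 : ν1 * (w ⬝ᵥ Q1 *ᵥ w) + ν2 * (w ⬝ᵥ Q2 *ᵥ w) = v ⬝ᵥ w := by
    rw [hvw, hQdef]
    simp [add_mulVec, smul_mulVec, dotProduct_add, dotProduct_smul]
  exact scalar_key σ1 σ2 ν1 ν2 _ _ _ _ _ hσ1 hσ2 hν1 hν2 hq_pos hq1_pos hq2_pos hr1 hr2 h1 h2 h3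

lemma measurable_feat {p : ℕ} (i : Fin (p + 1)) :
    Measurable fun x : Fin p → ℝ => feat x i := by
  refine Fin.cases ?_ ?_ i
  · simpa [feat] using measurable_const
  · intro j; simpa [feat] using measurable_pi_apply j

lemma abs_feat_le {p : ℕ} {x : Fin p → ℝ} (hx : x ∈ Set.Icc (0 : Fin p → ℝ) 1)
    (i : Fin (p + 1)) : |feat x i| ≤ 1 := by
  obtain ⟨h0, h1⟩ := hx
  refine Fin.cases ?_ ?_ i
  · simp [feat]
  · intro j
    have ha := Pi.le_def.1 h0 j
    have hb := Pi.le_def.1 h1 j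
    simp only [Pi.zero_apply, Pi.one_apply] at ha hb
    simp only [feat, Fin.cons_succ]
    rw [abs_le]
    exact ⟨by linarith, hb⟩

lemma feat_ne_zero {p : ℕ} (x : Fin p → ℝ) : feat x ≠ 0 := by
  intro h
  have h0 := congrFun h 0
  simp [feat] at h0

lemma measurable_quad {p : ℕ} (M : Matrix (Fin (p + 1)) (Fin (p + 1)) ℝ) :
    Measurable fun x : Fin p → ℝ => feat x ⬝ᵥ (M *ᵥ feat x) := by
  simp only [dotProduct, mulVec]
  exact Finset.measurable_sum _ fun i _ => (measurable_feat i).mul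
    (Finset.measurable_sum _ fun j _ => measurable_const.mul (measurable_feat j))

end Aux

/-- The ideal regret is minimized over admissible allocations by the constant
allocation proportional to the standard deviations:
`π₁⁰ ≡ σ₁/(σ₁+σ₂)`, `π₂⁰ ≡ σ₂/(σ₁+σ₂)`. -/
theorem idealRegret_minimized_by_proportional_allocation
    (p : ℕ) (hp : 1 ≤ p)
    (f π1 π2 : (Fin p → ℝ) → ℝ) (σ1 σ2 α1 α2 : ℝ) (β1 β2 : Fin p → ℝ)
    (n : ℝ) (hn : 0 < n)
    (hσ1 : 0 < σ1) (hσ2 : 0 < σ2)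
    (hf_meas : Measurable f) (hf_nonneg : ∀ x, 0 ≤ f x)
    (hf_bdd : ∃ C, ∀ x, f x ≤ C)
    (hf_density : ∫ x in Set.Icc (0 : Fin p → ℝ) 1, f x = 1)
    (hπ1_meas : Measurable π1) (hπ2_meas : Measurable π2)
    (hπ1_range : ∀ x, π1 x ∈ Set.Icc (0 : ℝ) 1)
    (hπ2_range : ∀ x, π2 x ∈ Set.Icc (0 : ℝ) 1)
    (hπ_sum : ∀ x, π1 x + π2 x = 1)
    (hν1_pos : 0 < ∫ x in Set.Icc (0 : Fin p → ℝ) 1, π1 x * f x)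
    (hν2_pos : 0 < ∫ x in Set.Icc (0 : Fin p → ℝ) 1, π2 x * f x)
    (hQ1_pos : ((1 / ∫ x in Set.Icc (0 : Fin p → ℝ) 1, π1 x * f x) •
        momentMatrix p fun x => π1 x * f x).PosDef)
    (hQ2_pos : ((1 / ∫ x in Set.Icc (0 : Fin p → ℝ) 1, π2 x * f x) •
        momentMatrix p fun x => π2 x * f x).PosDef)
    (hQ_pos : (momentMatrix p f).PosDef) :
    idealRegret p f σ1 σ2 α1 α2 β1 β2 n
        (fun _ => σ1 / (σ1 + σ2)) (fun _ => σ2 / (σ1 + σ2)) ≤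
      idealRegret p f σ1 σ2 α1 α2 β1 β2 n π1 π2 := by
  obtain ⟨C, hC⟩ := hf_bdd
  have hC0 : 0 ≤ C := le_trans (hf_nonneg 0) (hC 0)
  have hσ12 : 0 < σ1 + σ2 := by linarith
  set S : Set (Fin p → ℝ) := Set.Icc 0 1 with hSdef
  have hSmeas : MeasurableSet S := measurableSet_Icc
  haveI : IsFiniteMeasure (volume.restrict S) :=
    ⟨by rw [Measure.restrict_apply_univ]; exact (isCompact_Icc).measure_lt_top⟩
  -- integrability of moment-matrix entries
  have hInt : ∀ w : (Fin p → ℝ) → ℝ, Measurable w → (∀ x ∈ S, |w x| ≤ C) →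
      ∀ i j : Fin (p + 1), IntegrableOn (fun x => feat x i * feat x j * w x) S := by
    intro w hw hwb i j
    refine ⟨(((measurable_feat i).mul (measurable_feat j)).mul hw).aestronglyMeasurable, ?_⟩
    apply HasFiniteIntegral.of_bounded (C := C)
    refine (ae_restrict_iff' hSmeas).2 (ae_of_all _ fun x hx => ?_)
    have h1 := abs_feat_le hx i
    have h2 := abs_feat_le hx j
    have h3 := hwb x hx
    have habs : ‖feat x i * feat x j * w x‖ = |feat x i| * |feat x j| * |w x| := by
      simp [abs_mul, Real.norm_eq_abs]
    rw [habs]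
    calc |feat x i| * |feat x j| * |w x|
        ≤ 1 * 1 * C :=
          mul_le_mul (mul_le_mul h1 h2 (abs_nonneg _) zero_le_one) h3 (abs_nonneg _)
            (by norm_num)
      _ = C := by ring
  have hb1 : ∀ x ∈ S, |π1 x * f x| ≤ C := by
    intro x _
    rw [abs_mul, abs_of_nonneg (hπ1_range x).1, abs_of_nonneg (hf_nonneg x)]
    calc π1 x * f x ≤ 1 * C :=
      mul_le_mul (hπ1_range x).2 (hC x) (hf_nonneg x) zero_le_one
    _ = C := one_mul C
  have hb2 : ∀ x ∈ S, |π2 x * f x| ≤ C := by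
    intro x _
    rw [abs_mul, abs_of_nonneg (hπ2_range x).1, abs_of_nonneg (hf_nonneg x)]
    calc π2 x * f x ≤ 1 * C :=
      mul_le_mul (hπ2_range x).2 (hC x) (hf_nonneg x) zero_le_one
    _ = C := one_mul C
  set ν1 : ℝ := ∫ x in S, π1 x * f x with hν1def
  set ν2 : ℝ := ∫ x in S, π2 x * f x with hν2def
  set M1 : Matrix (Fin (p+1)) (Fin (p+1)) ℝ := momentMatrix p fun x => π1 x * f x with hM1def
  set M2 : Matrix (Fin (p+1)) (Fin (p+1)) ℝ := momentMatrix p fun x => π2 x * f x with hM2def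
  set Q1 : Matrix (Fin (p+1)) (Fin (p+1)) ℝ := (1 / ν1) • M1 with hQ1def
  set Q2 : Matrix (Fin (p+1)) (Fin (p+1)) ℝ := (1 / ν2) • M2 with hQ2def
  have hsmul1 : ν1 • Q1 = M1 := by
    rw [hQ1def, smul_smul, mul_one_div, div_self hν1_pos.ne', one_smul]
  have hsmul2 : ν2 • Q2 = M2 := by
    rw [hQ2def, smul_smul, mul_one_div, div_self hν2_pos.ne', one_smul]
  have hQtot : momentMatrix p f = ν1 • Q1 + ν2 • Q2 := by
    rw [hsmul1, hsmul2, hM1def, hM2def]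
    ext i j
    simp only [momentMatrix, Matrix.add_apply, Matrix.of_apply]
    rw [← integral_add (hInt (fun x => π1 x * f x) (hπ1_meas.mul hf_meas) hb1 i j)
      (hInt (fun x => π2 x * f x) (hπ2_meas.mul hf_meas) hb2 i j)]
    congr 1
    funext x
    linear_combination (-(feat x i * feat x j * f x)) * (hπ_sum x)
  -- the proportional allocation
  set c1 : ℝ := σ1 / (σ1 + σ2) with hc1def
  set c2 : ℝ := σ2 / (σ1 + σ2) with hc2def
  have hc1_pos : 0 < c1 := div_pos hσ1 hσ12
  have hc2_pos : 0 < c2 := div_pos hσ2 hσ12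
  have hint_c1 : (∫ y in S, c1 * f y) = c1 := by
    rw [integral_const_mul, hf_density, mul_one]
  have hint_c2 : (∫ y in S, c2 * f y) = c2 := by
    rw [integral_const_mul, hf_density, mul_one]
  have hM0 : ∀ c : ℝ, momentMatrix p (fun y => c * f y) = c • momentMatrix p f := by
    intro c
    ext i j
    simp only [momentMatrix, Matrix.smul_apply, Matrix.of_apply, smul_eq_mul]
    rw [← integral_const_mul]
    congr 1
    funext x
    ring
  have hQ01 : (1 / ∫ y in S, c1 * f y) • momentMatrix p (fun y => c1 * f y)
      = momentMatrix p f := by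
    rw [hint_c1, hM0, smul_smul, one_div_mul_cancel hc1_pos.ne', one_smul]
  have hQ02 : (1 / ∫ y in S, c2 * f y) • momentMatrix p (fun y => c2 * f y)
      = momentMatrix p f := by
    rw [hint_c2, hM0, smul_smul, one_div_mul_cancel hc2_pos.ne', one_smul]
  -- varFun formulas
  have hvar_gen : ∀ x, varFun p f σ1 σ2 π1 π2 x
      = feat x ⬝ᵥ (((σ1 ^ 2 / ν1) • Q1⁻¹ + (σ2 ^ 2 / ν2) • Q2⁻¹) *ᵥ feat x) := fun x => rfl
  have hvar0 : ∀ x, varFun p f σ1 σ2 (fun _ => c1) (fun _ => c2) x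
      = (σ1 + σ2) ^ 2 * (feat x ⬝ᵥ (momentMatrix p f)⁻¹ *ᵥ feat x) := by
    intro x
    show feat x ⬝ᵥ
        (((σ1 ^ 2 / ∫ y in S, c1 * f y) •
            ((1 / ∫ y in S, c1 * f y) • momentMatrix p (fun y => c1 * f y))⁻¹ +
          (σ2 ^ 2 / ∫ y in S, c2 * f y) •
            ((1 / ∫ y in S, c2 * f y) • momentMatrix p (fun y => c2 * f y))⁻¹) *ᵥ feat x) = _
    rw [hQ01, hQ02, hint_c1, hint_c2, ← add_smul]
    have hsc : σ1 ^ 2 / c1 + σ2 ^ 2 / c2 = (σ1 + σ2) ^ 2 := by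
      rw [hc1def, hc2def]
      field_simp
    rw [hsc, smul_mulVec, dotProduct_smul, smul_eq_mul]
  have hq_pos : ∀ x, 0 < feat x ⬝ᵥ (momentMatrix p f)⁻¹ *ᵥ feat x := fun x => by
    simpa using hQ_pos.inv.dotProduct_mulVec_pos (feat_ne_zero x)
  have hV0_pos : ∀ x, 0 < varFun p f σ1 σ2 (fun _ => c1) (fun _ => c2) x := by
    intro x
    rw [hvar0 x]
    exact mul_pos (by positivity) (hq_pos x)
  have hV_le : ∀ x, varFun p f σ1 σ2 (fun _ => c1) (fun _ => c2) x
      ≤ varFun p f σ1 σ2 π1 π2 x := by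
    intro x
    rw [hvar0 x, hvar_gen x, hQtot]
    have hkey := matrix_key hσ1 hσ2 hν1_pos hν2_pos hQ1_pos hQ2_pos (feat x) (feat_ne_zero x)
    simpa [add_mulVec, smul_mulVec, dotProduct_add, dotProduct_smul] using hkey
  -- pointwise comparison of the integrands
  have hpoint : ∀ x,
      stdNormalCDF (-(Real.sqrt n * |(α1 + ∑ i, β1 i * x i) - (α2 + ∑ i, β2 i * x i)|) /
          Real.sqrt (varFun p f σ1 σ2 (fun _ => c1) (fun _ => c2) x)) *
        |(α2 + ∑ i, β2 i * x i) - (α1 + ∑ i, β1 i * x i)| * f x ≤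
      stdNormalCDF (-(Real.sqrt n * |(α1 + ∑ i, β1 i * x i) - (α2 + ∑ i, β2 i * x i)|) /
          Real.sqrt (varFun p f σ1 σ2 π1 π2 x)) *
        |(α2 + ∑ i, β2 i * x i) - (α1 + ∑ i, β1 i * x i)| * f x := by
    intro x
    have ha : 0 ≤ Real.sqrt n * |(α1 + ∑ i, β1 i * x i) - (α2 + ∑ i, β2 i * x i)| :=
      mul_nonneg (Real.sqrt_nonneg _) (abs_nonneg _)
    have hs0 : 0 < Real.sqrt (varFun p f σ1 σ2 (fun _ => c1) (fun _ => c2) x) :=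
      Real.sqrt_pos.2 (hV0_pos x)
    have hss : Real.sqrt (varFun p f σ1 σ2 (fun _ => c1) (fun _ => c2) x)
        ≤ Real.sqrt (varFun p f σ1 σ2 π1 π2 x) := Real.sqrt_le_sqrt (hV_le x)
    have hmono : stdNormalCDF
          (-(Real.sqrt n * |(α1 + ∑ i, β1 i * x i) - (α2 + ∑ i, β2 i * x i)|) /
            Real.sqrt (varFun p f σ1 σ2 (fun _ => c1) (fun _ => c2) x)) ≤
        stdNormalCDF
          (-(Real.sqrt n * |(α1 + ∑ i, β1 i * x i) - (α2 + ∑ i, β2 i * x i)|) /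
            Real.sqrt (varFun p f σ1 σ2 π1 π2 x)) := by
      apply stdNormalCDF_mono
      rw [neg_div, neg_div, neg_le_neg_iff]
      gcongr
    exact mul_le_mul_of_nonneg_right (mul_le_mul_of_nonneg_right hmono (abs_nonneg _))
      (hf_nonneg x)
  -- bound and measurability of the right-hand integrand
  obtain ⟨K, hK0, hΦle⟩ : ∃ K : ℝ, 0 ≤ K ∧ ∀ y, stdNormalCDF y ≤ K :=
    ⟨_, integral_nonneg gaussDens_nonneg, stdNormalCDF_le⟩
  set B : ℝ := |α2 - α1| + ∑ i, |β2 i - β1 i| with hBdef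
  have hB0 : 0 ≤ B := by positivity
  have hΔbd : ∀ x ∈ S, |(α2 + ∑ i, β2 i * x i) - (α1 + ∑ i, β1 i * x i)| ≤ B := by
    intro x hx
    have hx01 : ∀ i, |x i| ≤ 1 := by
      intro i
      obtain ⟨h0, h1⟩ := hx
      have ha := Pi.le_def.1 h0 i
      have hb := Pi.le_def.1 h1 i
      simp only [Pi.zero_apply, Pi.one_apply] at ha hb
      rw [abs_le]
      exact ⟨by linarith, hb⟩
    have hsum : ∑ i, (β2 i - β1 i) * x i = (∑ i, β2 i * x i) - ∑ i, β1 i * x i := by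
      rw [← Finset.sum_sub_distrib]
      exact Finset.sum_congr rfl fun i _ => by ring
    have hrw : (α2 + ∑ i, β2 i * x i) - (α1 + ∑ i, β1 i * x i)
        = (α2 - α1) + ∑ i, (β2 i - β1 i) * x i := by rw [hsum]; ring
    rw [hrw]
    calc |(α2 - α1) + ∑ i, (β2 i - β1 i) * x i|
        ≤ |α2 - α1| + |∑ i, (β2 i - β1 i) * x i| := abs_add_le _ _
      _ ≤ |α2 - α1| + ∑ i, |(β2 i - β1 i) * x i| := by
          gcongr
          exact Finset.abs_sum_le_sum_abs _ _
      _ ≤ |α2 - α1| + ∑ i, |β2 i - β1 i| := by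
          refine add_le_add_right (Finset.sum_le_sum fun i _ => ?_) _
          rw [abs_mul]
          calc |β2 i - β1 i| * |x i| ≤ |β2 i - β1 i| * 1 :=
                mul_le_mul_of_nonneg_left (hx01 i) (abs_nonneg _)
            _ = |β2 i - β1 i| := mul_one _
  have hg1_meas : Measurable fun x : Fin p → ℝ => α1 + ∑ i, β1 i * x i :=
    measurable_const.add (Finset.measurable_sum _ fun i _ =>
      measurable_const.mul (measurable_pi_apply i))
  have hg2_meas : Measurable fun x : Fin p → ℝ => α2 + ∑ i, β2 i * x i :=
    measurable_const.add (Finset.measurable_sum _ fun i _ =>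
      measurable_const.mul (measurable_pi_apply i))
  have hV_meas : Measurable (varFun p f σ1 σ2 π1 π2) := by
    have : varFun p f σ1 σ2 π1 π2
        = fun x => feat x ⬝ᵥ (((σ1 ^ 2 / ν1) • Q1⁻¹ + (σ2 ^ 2 / ν2) • Q2⁻¹) *ᵥ feat x) :=
      funext hvar_gen
    rw [this]
    exact measurable_quad _
  have hrhs_meas : Measurable fun x : Fin p → ℝ =>
      stdNormalCDF (-(Real.sqrt n * |(α1 + ∑ i, β1 i * x i) - (α2 + ∑ i, β2 i * x i)|) /
          Real.sqrt (varFun p f σ1 σ2 π1 π2 x)) *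
        |(α2 + ∑ i, β2 i * x i) - (α1 + ∑ i, β1 i * x i)| * f x := by
    refine Measurable.mul (Measurable.mul ?_ (hg2_meas.sub hg1_meas).abs) hf_meas
    refine stdNormalCDF_mono.measurable.comp ?_
    exact ((measurable_const.mul (hg1_meas.sub hg2_meas).abs).neg).div
      (Real.continuous_sqrt.measurable.comp hV_meas)
  have hrhs_int : IntegrableOn (fun x : Fin p → ℝ =>
      stdNormalCDF (-(Real.sqrt n * |(α1 + ∑ i, β1 i * x i) - (α2 + ∑ i, β2 i * x i)|) /
          Real.sqrt (varFun p f σ1 σ2 π1 π2 x)) *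
        |(α2 + ∑ i, β2 i * x i) - (α1 + ∑ i, β1 i * x i)| * f x) S := by
    refine ⟨hrhs_meas.aestronglyMeasurable, ?_⟩
    apply HasFiniteIntegral.of_bounded (C := K * B * C)
    refine (ae_restrict_iff' hSmeas).2 (ae_of_all _ fun x hx => ?_)
    have hnn : 0 ≤ stdNormalCDF (-(Real.sqrt n *
          |(α1 + ∑ i, β1 i * x i) - (α2 + ∑ i, β2 i * x i)|) /
          Real.sqrt (varFun p f σ1 σ2 π1 π2 x)) *
        |(α2 + ∑ i, β2 i * x i) - (α1 + ∑ i, β1 i * x i)| * f x :=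
      mul_nonneg (mul_nonneg (stdNormalCDF_nonneg _) (abs_nonneg _)) (hf_nonneg x)
    rw [Real.norm_eq_abs, abs_of_nonneg hnn]
    refine mul_le_mul (mul_le_mul (hΦle _) (hΔbd x hx) (abs_nonneg _) hK0) (hC x)
      (hf_nonneg x) (by positivity)
  -- conclude
  simp only [idealRegret]
  rw [← hSdef]
  exact integral_mono_of_nonneg
    (ae_of_all _ fun x =>
      mul_nonneg (mul_nonneg (stdNormalCDF_nonneg _) (abs_nonneg _)) (hf_nonneg x))
    hrhs_int
    (ae_of_all _ fun x => hpoint x)
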